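/- Fix integers p, q ≥ 1 and a constant C > 0, and work in ℝ^p × ℝ^q with the Euclidean norm ‖(x₁,x₂)‖² = ‖x₁‖² + ‖x₂‖². For a unit vector u ∈ ℝ^q, define N_u = {(x₁, z·u) : x₁ ∈ ℝ^p, z ≥ 0, ‖x₁‖² + (C − z)² = C²}. Let ξ = (ξ₁, ξ₂) ∈ ℝ^p × ℝ^q with ξ₂ ≠ 0, set ũ = −ξ₂/‖ξ₂‖, and let N₂^C = {(z₁, z₂) ∈ ℝ² : z₁² + (C + z₂)² = C²} be the circle of radius C in the plane centered at (0, −C). Then the Euclidean infimum distance from ξ to N_ũ equals the Euclidean infimum distance from the point (‖ξ₁‖, ‖ξ₂‖) ∈ ℝ² to the circle N₂^C. -/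

import Mathlib

open Metric

private lemma infDist_le_infDist_aux {X Y : Type*} [MetricSpace X] [MetricSpace Y]
    (x : X) (y : Y) (s : Set X) (t : Set Y) (ht : t.Nonempty)
    (h : ∀ b ∈ t, ∃ a ∈ s, dist x a ≤ dist y b) :
    Metric.infDist x s ≤ Metric.infDist y t := by
  by_contra hc
  push_neg at hc
  obtain ⟨b, hb, hlt⟩ := (Metric.infDist_lt_iff ht).1 hc
  obtain ⟨a, ha, hle⟩ := h b hb
  exact absurd (le_trans (Metric.infDist_le_dist_of_mem ha) hle) (not_le.2 hlt)

/-- The bounding sphere `N_u = {(x₁, z·u) : z ≥ 0, ‖x₁‖² + (C − z)² = C²}` inside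
`ℝ^p × ℝ^q` equipped with the Euclidean (L²) product norm. -/
def Nsphere (p q : ℕ) (C : ℝ) (u : EuclideanSpace ℝ (Fin q)) :
    Set (WithLp 2 (EuclideanSpace ℝ (Fin p) × EuclideanSpace ℝ (Fin q))) :=
  {w | ∃ (x₁ : EuclideanSpace ℝ (Fin p)) (z : ℝ), 0 ≤ z ∧
    ‖x₁‖ ^ 2 + (C - z) ^ 2 = C ^ 2 ∧
    w = (WithLp.equiv 2 (EuclideanSpace ℝ (Fin p) × EuclideanSpace ℝ (Fin q))).symm (x₁, z • u)}

/-- Two-dimensional reduction: the distance from `ξ = (ξ₁, ξ₂)` (with `ξ₂ ≠ 0`) to the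
farthest bounding sphere `N_ũ`, `ũ = −ξ₂/‖ξ₂‖`, equals the Euclidean distance in the
plane from `(‖ξ₁‖, ‖ξ₂‖)` to the circle `{z₁² + (C + z₂)² = C²}` of radius `C`
centered at `(0, −C)`. -/
theorem stmt_14 (p q : ℕ) (hp : 1 ≤ p) (hq : 1 ≤ q) (C : ℝ) (hC : 0 < C)
    (ξ₁ : EuclideanSpace ℝ (Fin p)) (ξ₂ : EuclideanSpace ℝ (Fin q)) (hξ₂ : ξ₂ ≠ 0) :
    Metric.infDist
        ((WithLp.equiv 2 (EuclideanSpace ℝ (Fin p) × EuclideanSpace ℝ (Fin q))).symm (ξ₁, ξ₂))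
        (Nsphere p q C (-(‖ξ₂‖⁻¹ • ξ₂))) =
      Metric.infDist
        ((WithLp.equiv 2 (Fin 2 → ℝ)).symm ![‖ξ₁‖, ‖ξ₂‖] : EuclideanSpace ℝ (Fin 2))
        {w : EuclideanSpace ℝ (Fin 2) | (w 0) ^ 2 + (C + w 1) ^ 2 = C ^ 2} := by
  have hn2 : (0:ℝ) < ‖ξ₂‖ := norm_pos_iff.mpr hξ₂
  set u : EuclideanSpace ℝ (Fin q) := -(‖ξ₂‖⁻¹ • ξ₂) with hu_def
  set ξ := (WithLp.equiv 2 (EuclideanSpace ℝ (Fin p) × EuclideanSpace ℝ (Fin q))).symm (ξ₁, ξ₂)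
    with hξ_def
  set a := ((WithLp.equiv 2 (Fin 2 → ℝ)).symm ![‖ξ₁‖, ‖ξ₂‖] : EuclideanSpace ℝ (Fin 2))
    with ha_def
  -- distance from ξ₂ to z • u
  have hdist2 : ∀ z : ℝ, 0 ≤ z → dist ξ₂ (z • u) = ‖ξ₂‖ + z := by
    intro z hz
    have : ξ₂ - z • u = (1 + z * ‖ξ₂‖⁻¹) • ξ₂ := by
      rw [hu_def]
      rw [smul_neg, smul_smul, sub_neg_eq_add, add_smul, one_smul]
    rw [dist_eq_norm, this, norm_smul]
    have h1 : (0:ℝ) ≤ 1 + z * ‖ξ₂‖⁻¹ := by positivity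
    rw [Real.norm_eq_abs, abs_of_nonneg h1]
    field_simp
  -- distance formula in the product space
  have hdistP : ∀ (x₁ : EuclideanSpace ℝ (Fin p)) (z : ℝ), 0 ≤ z →
      dist ξ ((WithLp.equiv 2 (EuclideanSpace ℝ (Fin p) × EuclideanSpace ℝ (Fin q))).symm
        (x₁, z • u)) = Real.sqrt (dist ξ₁ x₁ ^ 2 + (‖ξ₂‖ + z) ^ 2) := by
    intro x₁ z hz
    rw [hξ_def, WithLp.prod_dist_eq_of_L2]
    simp only [WithLp.equiv_symm_apply, WithLp.toLp_fst, WithLp.toLp_snd]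
    rw [hdist2 z hz]
  -- distance formula in the plane
  have hdistE : ∀ w : EuclideanSpace ℝ (Fin 2),
      dist a w = Real.sqrt ((‖ξ₁‖ - w 0) ^ 2 + (‖ξ₂‖ - w 1) ^ 2) := by
    intro w
    rw [EuclideanSpace.dist_eq]
    rw [Fin.sum_univ_two]
    congr 2 <;> simp [ha_def, Real.dist_eq, sq_abs]
  -- a unit direction for ξ₁
  obtain ⟨v, hv1, hv2⟩ : ∃ v : EuclideanSpace ℝ (Fin p), ‖v‖ = 1 ∧ ξ₁ = ‖ξ₁‖ • v := by
    by_cases h : ξ₁ = 0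
    · refine ⟨EuclideanSpace.single ⟨0, hp⟩ 1, ?_, ?_⟩
      · simp [EuclideanSpace.norm_single]
      · simp [h]
    · refine ⟨‖ξ₁‖⁻¹ • ξ₁, ?_, ?_⟩
      · rw [norm_smul, Real.norm_eq_abs, abs_inv, abs_norm]
        exact inv_mul_cancel₀ (norm_ne_zero_iff.mpr h)
      · rw [smul_smul]
        rw [mul_inv_cancel₀ (norm_ne_zero_iff.mpr h), one_smul]
  have hSne : (Nsphere p q C u).Nonempty := by
    refine ⟨_, 0, 0, le_refl 0, by simp, rfl⟩
  have hTne : ({w : EuclideanSpace ℝ (Fin 2) | (w 0) ^ 2 + (C + w 1) ^ 2 = C ^ 2}).Nonempty := by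
    exact ⟨0, by simp⟩
  apply le_antisymm
  · apply infDist_le_infDist_aux _ _ _ _ hTne
    intro w hw
    have hw' : (w 0) ^ 2 + (C + w 1) ^ 2 = C ^ 2 := hw
    have hz : 0 ≤ -(w 1) := by nlinarith [sq_nonneg (w 0)]
    set z := -(w 1) with hzdef
    set x₁ : EuclideanSpace ℝ (Fin p) := |w 0| • v with hx₁def
    have hnx₁ : ‖x₁‖ = |w 0| := by
      rw [hx₁def, norm_smul, Real.norm_eq_abs, abs_abs, hv1, mul_one]
    have hmem : (WithLp.equiv 2 (EuclideanSpace ℝ (Fin p) × EuclideanSpace ℝ (Fin q))).symm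
        (x₁, z • u) ∈ Nsphere p q C u := by
      refine ⟨x₁, z, hz, ?_, rfl⟩
      rw [hnx₁, sq_abs]
      have : C - z = C + w 1 := by rw [hzdef]; ring
      rw [this]; exact hw'
    refine ⟨_, hmem, ?_⟩
    rw [hdistP x₁ z hz, hdistE w]
    apply Real.sqrt_le_sqrt
    have hd : dist ξ₁ x₁ = abs (‖ξ₁‖ - abs (w 0)) := by
      rw [dist_eq_norm, hx₁def]
      nth_rewrite 1 [hv2]
      rw [← sub_smul, norm_smul, Real.norm_eq_abs, hv1, mul_one]
    rw [hd, sq_abs]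
    have h1 : (‖ξ₁‖ - |w 0|) ^ 2 ≤ (‖ξ₁‖ - w 0) ^ 2 := by
      nlinarith [le_abs_self (w 0), norm_nonneg ξ₁, abs_nonneg (w 0), sq_abs (w 0)]
    have h2 : (‖ξ₂‖ + z) ^ 2 = (‖ξ₂‖ - w 1) ^ 2 := by rw [hzdef]; ring
    linarith
  · apply infDist_le_infDist_aux _ _ _ _ hSne
    intro y hy
    obtain ⟨x₁, z, hz, hcirc, rfl⟩ := hy
    set w : EuclideanSpace ℝ (Fin 2) := (WithLp.equiv 2 (Fin 2 → ℝ)).symm ![‖x₁‖, -z]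
      with hwdef
    have hw0 : w 0 = ‖x₁‖ := by simp [hwdef]
    have hw1 : w 1 = -z := by simp [hwdef]
    have hmem : w ∈ {w : EuclideanSpace ℝ (Fin 2) | (w 0) ^ 2 + (C + w 1) ^ 2 = C ^ 2} := by
      simp only [Set.mem_setOf_eq, hw0, hw1]
      have : C + -z = C - z := by ring
      rw [this]; exact hcirc
    refine ⟨w, hmem, ?_⟩
    rw [hdistE w, hdistP x₁ z hz]
    apply Real.sqrt_le_sqrt
    have h1 : (‖ξ₁‖ - w 0) ^ 2 ≤ dist ξ₁ x₁ ^ 2 := by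
      rw [hw0, dist_eq_norm]
      have := abs_norm_sub_norm_le ξ₁ x₁
      nlinarith [abs_nonneg (‖ξ₁‖ - ‖x₁‖), sq_abs (‖ξ₁‖ - ‖x₁‖), norm_nonneg (ξ₁ - x₁)]
    have h2 : (‖ξ₂‖ - w 1) ^ 2 = (‖ξ₂‖ + z) ^ 2 := by rw [hw1]; ring
    linarith
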